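/- arXiv:2010.09562 — 3 statements merged into one kernel-verified Lean document; each statement's English description precedes it below -/
import Mathlib

section
/- Let k be a field, E ⊆ B commutative k-algebras, and R a commutative k-algebra. Write B ⊗_k R and E ⊗_k R for the scalar extensions. Suppose γ ∈ B ⊗_k R and D is a set of k-algebra homomorphisms δ : R → k such that (1) for every δ ∈ D, the induced map id_B ⊗ δ : B ⊗_k R → B sends γ into E, and (2) the only element s ∈ R with δ(s) = 0 for all δ ∈ D is s = 0. Then γ lies in the image of E ⊗_k R → B ⊗_k R. -/
open TensorProduct

theorem stmt_1 (k : Type*) [Field k]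
    (B R : Type*) [CommRing B] [CommRing R] [Algebra k B] [Algebra k R]
    (E : Subalgebra k B)
    (γ : B ⊗[k] R) (D : Set (R →ₐ[k] k))
    (h1 : ∀ δ ∈ D,
      (Algebra.TensorProduct.productMap (AlgHom.id k B)
        ((Algebra.ofId k B).comp δ)) γ ∈ E)
    (h2 : ∀ s : R, (∀ δ ∈ D, δ s = 0) → s = 0) :
    γ ∈ (Algebra.TensorProduct.map E.val (AlgHom.id k R)).range := by
  classical
  set Es : Submodule k B := Subalgebra.toSubmodule E with hEs
  set π : B →ₗ[k] (B ⧸ Es) := Es.mkQ with hπ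
  -- contraction maps
  set fδ : (R →ₐ[k] k) → (B ⊗[k] R →ₗ[k] B) := fun δ =>
    (TensorProduct.rid k B).toLinearMap ∘ₗ LinearMap.lTensor B δ.toLinearMap with hfδ
  set gδ : (R →ₐ[k] k) → ((B ⧸ Es) ⊗[k] R →ₗ[k] (B ⧸ Es)) := fun δ =>
    (TensorProduct.rid k (B ⧸ Es)).toLinearMap ∘ₗ
      LinearMap.lTensor (B ⧸ Es) δ.toLinearMap with hgδ
  have hprod : ∀ δ : R →ₐ[k] k,
      ((Algebra.TensorProduct.productMap (AlgHom.id k B)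
        ((Algebra.ofId k B).comp δ)).toLinearMap : B ⊗[k] R →ₗ[k] B) = fδ δ := by
    intro δ
    apply TensorProduct.ext'
    intro b r
    simp [hfδ, Algebra.ofId_apply, Algebra.smul_def, mul_comm]
  have hcomm : ∀ δ : R →ₐ[k] k,
      (gδ δ) ∘ₗ (π.rTensor R) = π ∘ₗ (fδ δ) := by
    intro δ
    apply TensorProduct.ext'
    intro b r
    simp [hfδ, hgδ]
  set τ : (B ⧸ Es) ⊗[k] R := π.rTensor R γ with hτ
  have hgτ : ∀ δ ∈ D, gδ δ τ = 0 := by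
    intro δ hδ
    have h := congrArg (fun φ : B ⊗[k] R →ₗ[k] (B ⧸ Es) => φ γ) (hcomm δ)
    simp only [LinearMap.comp_apply] at h
    rw [hτ, h]
    have hmem : fδ δ γ ∈ Es := by
      rw [← hprod δ]
      exact h1 δ hδ
    simpa [hπ, Submodule.Quotient.mk_eq_zero] using hmem
  -- basis argument: τ = 0
  set bM : Module.Basis (Module.Basis.ofVectorSpaceIndex k (B ⧸ Es)) k (B ⧸ Es) :=
    Module.Basis.ofVectorSpace k (B ⧸ Es) with hbM
  set e : (B ⧸ Es) ⊗[k] R ≃ₗ[k] (Module.Basis.ofVectorSpaceIndex k (B ⧸ Es) →₀ R) :=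
    (TensorProduct.congr bM.repr (LinearEquiv.refl k R)) ≪≫ₗ
      TensorProduct.finsuppScalarLeft k R _ with he
  have key : ∀ (δ : R →ₐ[k] k) (x : (B ⧸ Es) ⊗[k] R) (i : Module.Basis.ofVectorSpaceIndex k (B ⧸ Es)),
      δ (e x i) = bM.repr (gδ δ x) i := by
    intro δ x i
    induction x using TensorProduct.induction_on with
    | zero => simp
    | tmul m r =>
        simp [he, hgδ, Algebra.smul_def, mul_comm]
    | add x y hx hy =>
        simp only [map_add, Finsupp.add_apply, hx, hy]
  have hτ0 : τ = 0 := by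
    rw [← (LinearEquiv.map_eq_zero_iff e)]
    ext i
    refine h2 _ fun δ hδ => ?_
    rw [key δ τ i, hgτ δ hδ]
    simp
  -- exactness
  have hflat : Module.Flat k R := inferInstance
  have hexact : Function.Exact (Es.subtype.rTensor R) (π.rTensor R) :=
    Module.Flat.rTensor_exact R (LinearMap.exact_subtype_mkQ Es)
  obtain ⟨x, hx⟩ := (hexact γ).mp hτ0
  refine ⟨x, ?_⟩
  have hmaps : (Algebra.TensorProduct.map E.val (AlgHom.id k R)).toLinearMap =
      Es.subtype.rTensor R := TensorProduct.ext' fun m r => rfl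
  rw [← hx]
  exact LinearMap.congr_fun hmaps x
end

section
/- Let G and H be topological groups, f : G → H a continuous closed group homomorphism with finite kernel, Γ ⊆ G a subgroup whose closure in G has empty interior, and Z ⊆ H a finite subset. Then the set Z · closure(f(Γ)) has empty interior in H, provided f is also an open map onto its closed image; in particular the closure of Z · f(Γ) has empty interior. -/
open Pointwise

lemma aux_finite_mul {H : Type*} [Group H] [TopologicalSpace H] [IsTopologicalGroup H]
    {Z s : Set H} (hZ : Z.Finite) (hs : IsClosed s) (hi : interior s = ∅) :
    IsClosed (Z * s) ∧ interior (Z * s) = ∅ := by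
  refine Set.Finite.induction_on _ hZ (by simp) ?_
  intro a Z' ha hZ' ih
  have hsingle : ({a} : Set H) * s = a • s := by
    ext x
    simp only [Set.singleton_mul, Set.mem_image, Set.mem_smul_set, smul_eq_mul]
  have hrw : insert a Z' * s = a • s ∪ Z' * s := by
    rw [Set.insert_eq, Set.union_mul, hsingle]
  have hclosed : IsClosed (a • s) := hs.smul a
  have hint : interior (a • s) = ∅ := by
    rw [interior_smul, hi, Set.smul_set_empty]
  constructor
  · rw [hrw]; exact hclosed.union ih.1
  · rw [hrw, Set.union_comm, interior_union_isClosed_of_interior_empty ih.1 hint, ih.2]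

theorem stmt_7 (G H : Type*) [Group G] [TopologicalSpace G] [IsTopologicalGroup G]
    [Group H] [TopologicalSpace H] [IsTopologicalGroup H]
    [T2Space G] [T2Space H] [BaireSpace H]
    (f : G →* H) (hcont : Continuous f) (hclosed : IsClosedMap f)
    (hker : (f.ker : Set G).Finite)
    (hrange : IsClosed (Set.range f))
    (hopen : ∀ U : Set G, IsOpen U → ∃ V : Set H, IsOpen V ∧ f '' U = V ∩ Set.range f)
    (Γ : Subgroup G) (hΓ : interior (closure (Γ : Set G)) = ∅)
    (Z : Set H) (hZ : Z.Finite) :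
    interior (Z * closure (f '' (Γ : Set G))) = ∅ ∧
      interior (closure (Z * f '' (Γ : Set G))) = ∅ := by
  set s : Set G := closure (Γ : Set G) with hs_def
  have hs_closed : IsClosed s := isClosed_closure
  -- closure of image is contained in image of closure
  have hsub : closure (f '' (Γ : Set G)) ⊆ f '' s :=
    closure_minimal (Set.image_mono subset_closure) (hclosed s hs_closed)
  -- preimage of image of s is contained in ker * s
  have hpre : f ⁻¹' (f '' s) ⊆ (f.ker : Set G) * s := by
    intro x hx
    obtain ⟨y, hy, hfy⟩ := hx
    exact ⟨x * y⁻¹, by simp [MonoidHom.mem_ker, hfy], y, hy, by group⟩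
  have hks : interior ((f.ker : Set G) * s) = ∅ :=
    (aux_finite_mul hker hs_closed hΓ).2
  -- image of s has empty interior
  have himg : interior (f '' s) = ∅ := by
    by_contra h
    obtain ⟨z, hz⟩ := Set.nonempty_iff_ne_empty.2 h
    have hz' : z ∈ f '' s := interior_subset hz
    obtain ⟨x, _, hfx⟩ := hz'
    have hxmem : x ∈ f ⁻¹' interior (f '' s) := by
      simp [Set.mem_preimage, hfx, hz]
    have hopen' : IsOpen (f ⁻¹' interior (f '' s)) := isOpen_interior.preimage hcont
    have : f ⁻¹' interior (f '' s) ⊆ (f.ker : Set G) * s :=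
      (Set.preimage_mono interior_subset).trans hpre
    have : f ⁻¹' interior (f '' s) ⊆ interior ((f.ker : Set G) * s) :=
      interior_maximal this hopen' |>.trans_eq rfl
    rw [hks] at this
    exact this hxmem
  -- closure (f '' Γ) is closed with empty interior
  have hcl_int : interior (closure (f '' (Γ : Set G))) = ∅ := by
    have := interior_mono hsub
    rw [himg] at this
    exact Set.subset_empty_iff.1 this
  have hmain := aux_finite_mul hZ isClosed_closure hcl_int
  refine ⟨hmain.2, ?_⟩
  have hsub2 : closure (Z * f '' (Γ : Set G)) ⊆ Z * closure (f '' (Γ : Set G)) :=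
    closure_minimal (Set.mul_subset_mul_left subset_closure) hmain.1
  have := interior_mono hsub2
  rw [hmain.2] at this
  exact Set.subset_empty_iff.1 this
end

section
/- Let K and L be number fields with an isomorphism j between their finite adele rings 𝔸_L^f ≅ 𝔸_K^f as topological rings. Then [K : ℚ] = [L : ℚ]. -/
open IsDedekindDomain NumberField Multiplicative IsDedekindDomain.HeightOneSpectrum
open scoped WithZero

set_option maxHeartbeats 1000000
set_option synthInstance.maxHeartbeats 400000

noncomputable section

namespace AdeleDeg

lemma zm_div_le_one (a b : ℤᵐ⁰) (h : b ≠ 0) : a / b ≤ 1 ↔ a ≤ b := by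
  rw [div_le_one₀ (lt_of_le_of_ne zero_le (Ne.symm h))]

lemma zm_pow_unbounded (t s : ℤᵐ⁰) (ht : 1 < t) (hs : s ≠ 0) : ∃ n : ℕ, ¬ (t ^ n * s ≤ 1) := by
  have ht0 : t ≠ 0 := by rintro rfl; exact not_lt_zero' ht
  obtain ⟨u, rfl⟩ := (⟨_, WithZero.coe_unzero hs⟩ : ∃ u : Multiplicative ℤ, (u : ℤᵐ⁰) = _)
  obtain ⟨w, rfl⟩ := (⟨_, WithZero.coe_unzero ht0⟩ : ∃ u : Multiplicative ℤ, (u : ℤᵐ⁰) = _)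
  have hw : 1 < w := by exact_mod_cast ht
  have hw' : 1 ≤ Multiplicative.toAdd w := hw
  refine ⟨((1 - Multiplicative.toAdd u).toNat), ?_⟩
  rw [← WithZero.coe_pow, ← WithZero.coe_mul, ← WithZero.coe_one, WithZero.coe_le_coe]
  intro hle
  have h1 := Multiplicative.toAdd_le.mpr hle
  rw [toAdd_mul, toAdd_pow, toAdd_one] at h1
  rw [nsmul_eq_mul] at h1
  have h2 : ((1 - Multiplicative.toAdd u).toNat : ℤ) * 1 ≤
      ((1 - Multiplicative.toAdd u).toNat : ℤ) * Multiplicative.toAdd w :=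
    mul_le_mul_of_nonneg_left hw' (by positivity)
  have h4 : 1 - Multiplicative.toAdd u ≤ ((1 - Multiplicative.toAdd u).toNat : ℤ) :=
    Int.self_le_toNat _
  linarith

lemma exists_ofAdd_neg {t : ℤᵐ⁰} (h0 : t ≠ 0) (h1 : t ≤ 1) :
    ∃ m : ℕ, t = ((ofAdd (-(m : ℤ)) : Multiplicative ℤ) : ℤᵐ⁰) := by
  obtain ⟨u, rfl⟩ := (⟨_, WithZero.coe_unzero h0⟩ : ∃ u : Multiplicative ℤ, (u : ℤᵐ⁰) = _)
  have hu : u ≤ 1 := by exact_mod_cast h1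
  have hu' : Multiplicative.toAdd u ≤ 0 := hu
  refine ⟨(-Multiplicative.toAdd u).toNat, ?_⟩
  have : (-(((-Multiplicative.toAdd u).toNat : ℕ) : ℤ)) = Multiplicative.toAdd u := by omega
  rw [this]; rfl

variable {R : Type*} [CommRing R] [IsDedekindDomain R]

lemma ideal_dvd (I J : Ideal R)
    (h : ∀ (P : Ideal R) (k : ℕ), Prime P → P ^ k ∣ I → P ^ k ∣ J) : I = 0 ∨ I ∣ J := by
  induction I using UniqueFactorizationMonoid.induction_on_prime generalizing J with
  | h₁ => exact Or.inl rfl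
  | h₂ a ha => exact Or.inr (ha.dvd)
  | h₃ a p ha hp IH =>
      right
      have hpJ : p ∣ J := by
        simpa using h p 1 hp (by simpa using Dvd.intro a rfl)
      obtain ⟨J', rfl⟩ := hpJ
      have : a ∣ J' := by
        refine ((IH J') fun P k hP hPa => ?_).resolve_left ha
        by_cases hPp : P = p
        · subst hPp
          have h1 : P ^ (k + 1) ∣ P * a := by
            rw [pow_succ']
            exact mul_dvd_mul_left P hPa
          have h2 := h P (k + 1) hP h1
          rw [pow_succ'] at h2
          exact (mul_dvd_mul_iff_left hP.ne_zero).mp h2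
        · have hPa' : P ^ k ∣ p * a := dvd_mul_of_dvd_right hPa p
          have h2 : P ^ k ∣ p * J' := h P k hP hPa'
          refine hP.pow_dvd_of_dvd_mul_left k (fun hple => ?_) h2
          exact hPp (associated_iff_eq.mp (hP.associated_of_dvd hp hple))
      exact mul_dvd_mul_left p this

variable {K : Type*} [Field K] [Algebra R K] [IsFractionRing R K]

lemma exists_algebraMap_eq_of_valuation_le_one (k : K)
    (h : ∀ v : HeightOneSpectrum R, v.valuation K k ≤ 1) :
    ∃ b : R, algebraMap R K b = k := by
  obtain ⟨r, s, rfl⟩ := IsLocalization.exists_mk'_eq (nonZeroDivisors R) k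
  have hs0 : (s : R) ≠ 0 := nonZeroDivisors.coe_ne_zero s
  have hdvd : (s : R) ∣ r := by
    have h1 : Ideal.span {(s : R)} ∣ Ideal.span {r} := by
      refine (ideal_dvd _ _ fun P n hP hdP => ?_).resolve_left
        (by simpa [Submodule.zero_eq_bot, Ideal.span_singleton_eq_bot] using hs0)
      rcases Nat.eq_zero_or_pos n with rfl | hn
      · simpa using one_dvd _
      have hPbot : P ≠ ⊥ := by
        rintro rfl
        rw [← Ideal.zero_eq_bot, zero_pow hn.ne', zero_dvd_iff,
          Submodule.zero_eq_bot, Ideal.span_singleton_eq_bot] at hdP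
        exact hs0 hdP
      set v : HeightOneSpectrum R := ⟨P, Ideal.isPrime_of_prime hP, hPbot⟩ with hv
      have h2 : v.intValuationDef (s : R) ≤ ((ofAdd (-(n : ℤ)) : Multiplicative ℤ) : ℤᵐ⁰) :=
        (intValuation_le_pow_iff_dvd v (s : R) n).mpr hdP
      have h3 : v.intValuationDef r ≤ v.intValuationDef (s : R) := by
        have h4 := h v
        rw [valuation_of_mk', intValuation_apply, intValuation_apply] at h4
        exact (zm_div_le_one _ _ (intValuation_ne_zero v (s : R) hs0)).mp h4
      exact (intValuation_le_pow_iff_dvd v r n).mp (h3.trans h2)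
    exact Ideal.span_singleton_le_span_singleton.mp (Ideal.le_of_dvd h1)
  obtain ⟨b, rfl⟩ := hdvd
  refine ⟨b, ?_⟩
  rw [IsFractionRing.mk'_eq_div, map_mul]
  have : algebraMap R K s ≠ 0 := by
    simpa using fun hh => hs0 (IsFractionRing.injective R K (by simpa using hh))
  field_simp

/-- Approximate an element of `K` with `v`-valuation at most one by an element of `R`,
`v`-adically. -/
lemma approx_in_R (v : HeightOneSpectrum R) (k : K) (hk : v.valuation K k ≤ 1) (N : ℕ) :
    ∃ a : R, v.valuation K (k - algebraMap R K a) ≤ ((ofAdd (-(N : ℤ)) : Multiplicative ℤ) : ℤᵐ⁰) := by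
  obtain ⟨r, s, rfl⟩ := IsLocalization.exists_mk'_eq (nonZeroDivisors R) k
  have hs0 : (s : R) ≠ 0 := nonZeroDivisors.coe_ne_zero s
  obtain ⟨m, hm⟩ := exists_ofAdd_neg (intValuation_ne_zero v (s : R) hs0)
    (intValuation_le_one v (s : R))
  have hrle : v.intValuationDef r ≤ v.intValuationDef (s : R) := by
    have h4 := hk
    rw [valuation_of_mk', intValuation_apply, intValuation_apply] at h4
    exact (zm_div_le_one _ _ (intValuation_ne_zero v (s : R) hs0)).mp h4
  have hPm : v.asIdeal ^ m ∣ Ideal.span {(s : R)} :=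
    (intValuation_le_pow_iff_dvd v (s : R) m).mp hm.le
  have hbm : r ∈ v.asIdeal ^ m := by
    have h2 := (intValuation_le_pow_iff_dvd v r m).mp (hrle.trans hm.le)
    exact (Ideal.span_singleton_le_iff_mem _).mp (Ideal.le_of_dvd h2)
  obtain ⟨Jid, hJ⟩ := hPm
  have hndvd : ¬ v.asIdeal ∣ Jid := by
    rintro ⟨J2, hJ2⟩
    have : v.asIdeal ^ (m + 1) ∣ Ideal.span {(s : R)} := ⟨J2, by rw [hJ, hJ2, pow_succ]; ring⟩
    have h5 := (intValuation_le_pow_iff_dvd v (s : R) (m + 1)).mpr this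
    rw [hm] at h5
    change WithZero.exp _ ≤ WithZero.exp _ at h5
    rw [WithZero.exp_le_exp] at h5
    omega
  have hsup : Jid ⊔ v.asIdeal ^ N = ⊤ := by
    have hne : ¬ Jid ≤ v.asIdeal := fun hle => hndvd (Ideal.dvd_iff_le.mpr hle)
    have hlt : v.asIdeal < v.asIdeal ⊔ Jid :=
      lt_of_le_of_ne le_sup_left (fun hh => hne (le_sup_right.trans hh.ge))
    have htop : v.asIdeal ⊔ Jid = ⊤ :=
      (IsDedekindDomain.HeightOneSpectrum.isMaximal v).1.2 _ hlt
    exact ((Ideal.isCoprime_iff_sup_eq.mpr (by rwa [sup_comm] at htop)).pow_right).sup_eq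
  have key : r ∈ Ideal.span {(s : R)} ⊔ v.asIdeal ^ (m + N) := by
    have heq : v.asIdeal ^ m * (Jid ⊔ v.asIdeal ^ N)
        = Ideal.span {(s : R)} ⊔ v.asIdeal ^ (m + N) := by
      rw [Ideal.mul_sup, ← hJ, ← pow_add]
    rw [← heq, hsup, Ideal.mul_top]
    exact hbm
  obtain ⟨c1, hc1, c2, hc2, hsum⟩ := Submodule.mem_sup.mp key
  obtain ⟨a, ha⟩ := Ideal.mem_span_singleton'.mp hc1
  refine ⟨a, ?_⟩
  have hsK : algebraMap R K (s : R) ≠ 0 := fun hh =>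
    hs0 (IsFractionRing.injective R K (by simpa using hh))
  have hc2eq : c2 = r - a * (s : R) := by rw [← hsum, ← ha]; ring
  have hkeq : IsLocalization.mk' K r s - algebraMap R K a
      = algebraMap R K c2 / algebraMap R K (s : R) := by
    rw [IsFractionRing.mk'_eq_div, hc2eq, map_sub, map_mul,
      eq_div_iff hsK, sub_mul, div_mul_cancel₀ _ hsK]
  rw [hkeq, map_div₀, valuation_of_algebraMap, valuation_of_algebraMap,
    hm, intValuation_apply]
  have hc2v : v.intValuationDef c2 ≤ ((ofAdd (-((m + N : ℕ) : ℤ)) : Multiplicative ℤ) : ℤᵐ⁰) :=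
    (intValuation_le_pow_iff_dvd v c2 (m + N)).mpr (Ideal.dvd_span_singleton.mpr hc2)
  rw [div_le_iff₀ (lt_of_le_of_ne zero_le (Ne.symm WithZero.coe_ne_zero))]
  refine hc2v.trans (le_of_eq ?_)
  rw [← WithZero.coe_mul, ← ofAdd_add]
  congr 2
  push_cast
  ring

lemma ofAdd_neg_le_one (N : ℕ) : ((ofAdd (-(N : ℤ)) : Multiplicative ℤ) : ℤᵐ⁰) ≤ 1 := by
  rw [← WithZero.coe_one, WithZero.coe_le_coe, ← ofAdd_zero, Multiplicative.ofAdd_le]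
  omega

lemma closedBall_mem_nhds_zero (v : HeightOneSpectrum R) (γ : ℤᵐ⁰) (hγ : γ ≠ 0) :
    {x : v.adicCompletion K | Valued.v x ≤ γ} ∈ nhds (0 : v.adicCompletion K) := by
  obtain ⟨π, hπ⟩ := valuedAdicCompletion_surjective K v γ
  have hπ0 : (0 : ℤᵐ⁰) < Valued.v π := by
    rw [hπ]; exact lt_of_le_of_ne zero_le (Ne.symm hγ)
  apply IsOpen.mem_nhds
  · have hO : IsOpen ((v.adicCompletionIntegers K : Set (v.adicCompletion K))) :=
      Valued.isOpen_valuationSubring _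
    convert hO.preimage (continuous_mul_left π⁻¹) using 1
    ext x
    simp only [Set.mem_setOf_eq, Set.mem_preimage, SetLike.mem_coe, mem_adicCompletionIntegers,
      id, Valuation.map_mul, map_inv₀]
    rw [inv_mul_le_one₀ hπ0, hπ]
  · simp

lemma exists_closedBall_subset (v : HeightOneSpectrum R) {s : Set (v.adicCompletion K)}
    (hs : s ∈ nhds (0 : v.adicCompletion K)) :
    ∃ n : ℕ, {x : v.adicCompletion K | Valued.v x ≤ WithZero.exp (-(n : ℤ))} ⊆ s := by
  obtain ⟨γ, hγ⟩ := Valued.mem_nhds_zero.mp hs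
  have hg : MonoidWithZeroHom.ValueGroup₀.embedding γ.1 ≠ 0 :=
    MonoidWithZeroHom.ValueGroup₀.embedding_unit_ne_zero γ
  refine ⟨(1 - WithZero.log (MonoidWithZeroHom.ValueGroup₀.embedding γ.1)).toNat, fun x hx => hγ ?_⟩
  rw [Set.mem_setOf_eq] at hx ⊢
  rw [Valuation.restrict_lt_iff_lt_embedding]
  refine lt_of_le_of_lt hx ?_
  rw [← WithZero.exp_log hg, WithZero.exp_lt_exp, WithZero.log_exp]
  omega

lemma local_approx (v : HeightOneSpectrum R) (y : v.adicCompletion K)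
    (hy : Valued.v y ≤ 1) (N : ℕ) :
    ∃ a : R, Valued.v (y - algebraMap R (v.adicCompletion K) a)
      ≤ ((ofAdd (-(N : ℤ)) : Multiplicative ℤ) : ℤᵐ⁰) := by
  have hdense : DenseRange ((↑) : K → v.adicCompletion K) :=
    denseRange_algebraMap (K := K) v
  have hball : {z : v.adicCompletion K | Valued.v (z - y)
      ≤ ((ofAdd (-(N : ℤ)) : Multiplicative ℤ) : ℤᵐ⁰)} ∈ nhds y := by
    have h0 := closedBall_mem_nhds_zero (K := K) v ((ofAdd (-(N : ℤ)) : Multiplicative ℤ) : ℤᵐ⁰)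
      WithZero.coe_ne_zero
    rw [← sub_self y] at h0
    exact (continuous_id.sub continuous_const).continuousAt.preimage_mem_nhds h0
  obtain ⟨z, hz1, k, rfl⟩ := mem_closure_iff_nhds.mp (hdense y) _ hball
  have hz1' : Valued.v ((k : v.adicCompletion K) - y)
      ≤ ((ofAdd (-(N : ℤ)) : Multiplicative ℤ) : ℤᵐ⁰) := hz1
  have hk1 : v.valuation K k ≤ 1 := by
    rw [← valuedAdicCompletion_eq_valuation']
    have : (k : v.adicCompletion K) = ((k : v.adicCompletion K) - y) + y := by ring
    rw [this]
    exact le_trans (Valuation.map_add _ _ _)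
      (max_le (hz1'.trans (ofAdd_neg_le_one N)) hy)
  obtain ⟨a, ha⟩ := approx_in_R v k hk1 N
  refine ⟨a, ?_⟩
  have hcoe : (algebraMap R (v.adicCompletion K) a)
      = ((algebraMap R K a : K) : v.adicCompletion K) := rfl
  have hcoe2 : ((k - algebraMap R K a : K) : v.adicCompletion K)
      = (k : v.adicCompletion K) - ((algebraMap R K a : K) : v.adicCompletion K) := by
    exact map_sub (algebraMap K (v.adicCompletion K)) _ _
  have key : y - algebraMap R (v.adicCompletion K) a
      = (y - (k : v.adicCompletion K)) + ((k - algebraMap R K a : K) : v.adicCompletion K) := by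
    rw [hcoe2, hcoe]; ring
  rw [key]
  refine le_trans (Valuation.map_add _ _ _) (max_le ?_ ?_)
  · rw [show y - (k : v.adicCompletion K) = -((k : v.adicCompletion K) - y) by ring,
      Valuation.map_neg]
    exact hz1'
  · rw [valuedAdicCompletion_eq_valuation']
    exact ha

lemma crt {ι : Type*} [Finite ι] (I : ι → Ideal R) (hco : Pairwise (Function.onFun IsCoprime I))
    (a : ι → R) : ∃ b : R, ∀ i, b - a i ∈ I i := by
  obtain ⟨x, hx⟩ := Ideal.quotientInfToPiQuotient_surj hco (fun i => Ideal.Quotient.mk _ (a i))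
  obtain ⟨b, rfl⟩ := Ideal.Quotient.mk_surjective x
  refine ⟨b, fun i => ?_⟩
  have h := congrFun hx i
  rw [Ideal.quotientInfToPiQuotient_mk'] at h
  exact Ideal.Quotient.eq.mp h

lemma density (x : FiniteAdeleRing R K) (hx : ∀ v, Valued.v (x.1 v) ≤ 1) (r : R) (hr : r ≠ 0) :
    ∃ a : R, ∀ v : HeightOneSpectrum R,
      Valued.v (x.1 v - algebraMap R (v.adicCompletion K) a) ≤ v.intValuationDef r := by
  classical
  have hfin : {v : HeightOneSpectrum R | v.intValuationDef r < 1}.Finite := by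
    simp_rw [← intValuation_apply, intValuation_lt_one_iff_dvd]
    apply Ideal.finite_factors
    simpa only [Submodule.zero_eq_bot, ne_eq, Ideal.span_singleton_eq_bot]
  set Sf := hfin.toFinset with hSf
  have hN : ∀ v : HeightOneSpectrum R, ∃ n : ℕ,
      v.intValuationDef r = ((ofAdd (-(n : ℤ)) : Multiplicative ℤ) : ℤᵐ⁰) :=
    fun v => exists_ofAdd_neg (intValuation_ne_zero v r hr) (intValuation_le_one v r)
  choose Nv hNv using hN
  have hav : ∀ v : HeightOneSpectrum R, ∃ a : R,
      Valued.v (x.1 v - algebraMap R (v.adicCompletion K) a)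
        ≤ ((ofAdd (-(Nv v : ℤ)) : Multiplicative ℤ) : ℤᵐ⁰) :=
    fun v => local_approx v (x.1 v) (hx v) (Nv v)
  choose av hav' using hav
  have hco : Pairwise (Function.onFun IsCoprime
      (fun i : ↥Sf => (i : HeightOneSpectrum R).asIdeal ^ Nv (i : HeightOneSpectrum R))) := by
    intro i j hij
    have hne : (i : HeightOneSpectrum R).asIdeal ≠ (j : HeightOneSpectrum R).asIdeal :=
      fun hh => hij (Subtype.ext (HeightOneSpectrum.ext hh))
    exact (Ideal.isCoprime_iff_sup_eq.mpr
      (Ideal.IsMaximal.coprime_of_ne (isMaximal _) (isMaximal _) hne)).pow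
  obtain ⟨b, hb⟩ := crt _ hco (fun i : ↥Sf => av (i : HeightOneSpectrum R))
  refine ⟨b, fun v => ?_⟩
  have hxbv : x.1 v - algebraMap R (v.adicCompletion K) b
      = (x.1 v - algebraMap R (v.adicCompletion K) (av v))
        + algebraMap R (v.adicCompletion K) (av v - b) := by
    rw [RingHom.map_sub]; ring
  have hsecond : Valued.v (algebraMap R (v.adicCompletion K) (av v - b))
      = v.intValuationDef (av v - b) := by
    rw [valuedAdicCompletion_eq_valuation, valuation_of_algebraMap, intValuation_apply]
  by_cases hv : v ∈ Sf
  · rw [hxbv]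
    refine le_trans (Valuation.map_add _ _ _) (max_le ((hav' v).trans (le_of_eq (hNv v).symm)) ?_)
    rw [hsecond, hNv v]
    have hmem : av v - b ∈ v.asIdeal ^ Nv v := by
      have := hb ⟨v, hv⟩
      simpa using neg_mem this
    exact (intValuation_le_pow_iff_dvd v _ (Nv v)).mpr (Ideal.dvd_span_singleton.mpr hmem)
  · have h1 : v.intValuationDef r = 1 := le_antisymm (intValuation_le_one v r)
      (not_lt.mp (by simpa [hSf] using hv))
    rw [h1]
    refine le_trans (Valuation.map_sub _ _ _) (max_le (hx v) ?_)
    rw [valuedAdicCompletion_eq_valuation, valuation_of_algebraMap, intValuation_apply]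
    exact intValuation_le_one v b

section PB

variable (A : Type*) [CommRing A] [TopologicalSpace A]

/-- Power-bounded elements (a purely topological-ring-theoretic notion). -/
def PBgen (x : A) : Prop :=
  ∀ U ∈ nhds (0 : A), ∃ V ∈ nhds (0 : A), ∀ n : ℕ, ∀ y ∈ V, x ^ n * y ∈ U

variable {A} {B : Type*} [CommRing B] [TopologicalSpace B]

lemma pb_map (j : A ≃+* B) (hj : Continuous j) (hj' : Continuous j.symm) (x : A)
    (h : PBgen A x) : PBgen B (j x) := by
  intro U hU
  have hU' : j ⁻¹' U ∈ nhds (0 : A) := by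
    apply hj.continuousAt.preimage_mem_nhds
    rwa [map_zero]
  obtain ⟨V, hV, hV2⟩ := h _ hU'
  refine ⟨j.symm ⁻¹' V, ?_, ?_⟩
  · apply hj'.continuousAt.preimage_mem_nhds
    rwa [map_zero]
  · intro n y hy
    have h2 : j (x ^ n * j.symm y) ∈ U := hV2 n (j.symm y) hy
    rwa [map_mul, map_pow, RingEquiv.apply_symm_apply] at h2

end PB

section Topology

open scoped nonZeroDivisors

variable (R K)

lemma fa_hasBasis : (nhds (0 : FiniteAdeleRing R K)).HasBasis (fun _ : R⁰ => True)
    (fun r => {x : FiniteAdeleRing R K | ∀ v, Valued.v (x.1 v) ≤ v.intValuationDef (r : R)}) := by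
  classical
  have hopen : ∀ v : HeightOneSpectrum R,
      IsOpen ((v.adicCompletionIntegers K : Set (v.adicCompletion K))) :=
    fun v => Valued.isOpen_valuationSubring _
  have hN : nhds (0 : FiniteAdeleRing R K) = Filter.map (fun y => @id (FiniteAdeleRing R K)
      (RestrictedProduct.structureMap (fun v : HeightOneSpectrum R => v.adicCompletion K)
        (fun v => (v.adicCompletionIntegers K : Set (v.adicCompletion K))) Filter.cofinite y))
      (nhds 0) :=
    RestrictedProduct.nhds_zero_eq_map_structureMap (R := fun v : HeightOneSpectrum R =>
      v.adicCompletion K) (B := fun v => v.adicCompletionIntegers K) hopen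
  refine ⟨fun t => ⟨fun ht => ?_, fun ⟨r, _, hr⟩ => ?_⟩⟩
  · rw [hN, Filter.mem_map, nhds_pi, Filter.mem_pi] at ht
    obtain ⟨I, hI, u, hu, hIu⟩ := ht
    have hex : ∀ v : HeightOneSpectrum R, ∃ n : ℕ, ∀ y : v.adicCompletionIntegers K,
        Valued.v (y : v.adicCompletion K) ≤ WithZero.exp (-(n : ℤ)) → y ∈ u v := by
      intro v
      obtain ⟨w, hw, hwu⟩ := (mem_nhds_subtype _ _ _).mp (hu v)
      obtain ⟨n, hn⟩ := exists_closedBall_subset v hw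
      exact ⟨n, fun y hy => hwu (hn hy)⟩
    choose n hn using hex
    set J : Ideal R := ∏ v ∈ hI.toFinset, v.asIdeal ^ n v with hJ
    have hJ0 : J ≠ ⊥ := by
      rw [hJ, ← Ideal.zero_eq_bot, Finset.prod_ne_zero_iff]
      intro v _
      exact pow_ne_zero _ (by rw [Ideal.zero_eq_bot]; exact v.ne_bot)
    obtain ⟨r, hrJ, hr0⟩ := Submodule.exists_mem_ne_zero_of_ne_bot hJ0
    have hrv : ∀ v ∈ I, v.intValuationDef r ≤ WithZero.exp (-(n v : ℤ)) := by
      intro v hv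
      apply (intValuation_le_pow_iff_mem v r (n v)).mpr
      have hdvd : v.asIdeal ^ n v ∣ J :=
        Finset.dvd_prod_of_mem _ (hI.mem_toFinset.mpr hv)
      exact Ideal.le_of_dvd hdvd hrJ
    refine ⟨⟨r, mem_nonZeroDivisors_of_ne_zero hr0⟩, trivial, fun x hx => ?_⟩
    have hx1 : ∀ v : HeightOneSpectrum R, x.1 v ∈ v.adicCompletionIntegers K := fun v =>
      (mem_adicCompletionIntegers R K v).mpr ((hx v).trans (intValuation_le_one v r))
    have hy : (fun v : HeightOneSpectrum R => (⟨x.1 v, hx1 v⟩ : v.adicCompletionIntegers K))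
        ∈ I.pi u := by
      intro v hv
      exact hn v ⟨x.1 v, hx1 v⟩ ((hx v).trans (hrv v hv))
    exact hIu hy
  · have hr0 : (r : R) ≠ 0 := nonZeroDivisors.coe_ne_zero r
    apply Filter.mem_of_superset _ hr
    rw [hN, Filter.mem_map]
    have hfin : {v : HeightOneSpectrum R | v.intValuationDef (r : R) < 1}.Finite := by
      simp_rw [← intValuation_apply, intValuation_lt_one_iff_dvd]
      apply Ideal.finite_factors
      simpa only [Submodule.zero_eq_bot, ne_eq, Ideal.span_singleton_eq_bot]
    refine Filter.mem_of_superset (set_pi_mem_nhds hfin (s := fun v =>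
      Subtype.val ⁻¹' {z : v.adicCompletion K | Valued.v z ≤ v.intValuationDef (r : R)})
      fun v _ => continuous_subtype_val.continuousAt.preimage_mem_nhds
        (closedBall_mem_nhds_zero (K := K) v _ (intValuation_ne_zero v _ hr0))) ?_
    intro y hy v
    by_cases hv : v ∈ {v : HeightOneSpectrum R | v.intValuationDef (r : R) < 1}
    · exact hy v hv
    · have h1 : v.intValuationDef (r : R) = 1 :=
        le_antisymm (intValuation_le_one v _) (not_lt.mp hv)
      show Valued.v ((y v : v.adicCompletion K)) ≤ v.intValuationDef (r : R)
      rw [h1]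
      exact (mem_adicCompletionIntegers R K v).mp (y v).2

variable {R K}

lemma fa_algebraMap_comp (a : R) (v : HeightOneSpectrum R) :
    (algebraMap R (FiniteAdeleRing R K) a).1 v = algebraMap R (v.adicCompletion K) a := rfl

lemma valued_algebraMap_comp (a : R) (v : HeightOneSpectrum R) :
    Valued.v ((algebraMap R (FiniteAdeleRing R K) a).1 v) = v.intValuationDef a := by
  rw [fa_algebraMap_comp, valuedAdicCompletion_eq_valuation, valuation_of_algebraMap,
    intValuation_apply]

lemma pb_iff (x : FiniteAdeleRing R K) :
    PBgen (FiniteAdeleRing R K) x ↔ ∀ v, Valued.v (x.1 v) ≤ 1 := by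
  constructor
  · intro h
    by_contra hc
    push_neg at hc
    obtain ⟨w, hw⟩ := hc
    obtain ⟨V, hV, hV2⟩ := h _ ((fa_hasBasis R K).mem_of_mem (i := 1) trivial)
    obtain ⟨s, -, hs⟩ := (fa_hasBasis R K).mem_iff.mp hV
    have hs0 : (s : R) ≠ 0 := nonZeroDivisors.coe_ne_zero s
    have hys : algebraMap R (FiniteAdeleRing R K) (s : R) ∈ {x : FiniteAdeleRing R K |
        ∀ v, Valued.v (x.1 v) ≤ v.intValuationDef ((s : R⁰) : R)} :=
      fun v => le_of_eq (valued_algebraMap_comp _ v)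
    obtain ⟨n, hn⟩ := zm_pow_unbounded (Valued.v (x.1 w)) (w.intValuationDef (s : R)) hw
      (intValuation_ne_zero w (s : R) hs0)
    apply hn
    have hmem := hV2 n _ (hs hys)
    rw [Set.mem_setOf_eq] at hmem
    have := hmem w
    have hcompn : ((x ^ n * algebraMap R (FiniteAdeleRing R K) (s : R)).1 w)
        = (x.1 w) ^ n * (algebraMap R (FiniteAdeleRing R K) (s : R)).1 w := rfl
    rw [hcompn, Valuation.map_mul, Valuation.map_pow, valued_algebraMap_comp] at this
    calc Valued.v (x.1 w) ^ n * w.intValuationDef (s : R)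
        ≤ w.intValuationDef 1 := this
      _ ≤ 1 := intValuation_le_one w 1
  · intro h U hU
    obtain ⟨r, -, hr⟩ := (fa_hasBasis R K).mem_iff.mp hU
    refine ⟨_, (fa_hasBasis R K).mem_of_mem (i := r) trivial, ?_⟩
    intro n y hy
    apply hr
    have hr0 : (r : R) ≠ 0 := nonZeroDivisors.coe_ne_zero r
    rw [Set.mem_setOf_eq] at hy ⊢
    intro v
    have hcompn : ((x ^ n * y).1 v) = (x.1 v) ^ n * y.1 v := rfl
    rw [hcompn, Valuation.map_mul, Valuation.map_pow]
    exact (mul_le_of_le_one_left zero_le (pow_le_one' (h v) n)).trans (hy v)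

end Topology

section Assembly

variable (F : Type*) [Field F] [NumberField F]

lemma valued_algebraMapF (a : 𝓞 F) (v : HeightOneSpectrum (𝓞 F)) :
    Valued.v ((algebraMap (𝓞 F) (FiniteAdeleRing (𝓞 F) F) a).1 v) = v.intValuationDef a :=
  valued_algebraMap_comp a v

/-- The integral adeles, as an additive subgroup of the finite adele ring. -/
def Osub : AddSubgroup (FiniteAdeleRing (𝓞 F) F) where
  carrier := {x | ∀ v, Valued.v (x.1 v) ≤ 1}
  add_mem' := by
    intro a b ha hb v
    have hcomp : ((a + b).1 v) = a.1 v + b.1 v := rfl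
    rw [hcomp]
    exact le_trans (Valuation.map_add _ _ _) (max_le (ha v) (hb v))
  zero_mem' := by
    intro v
    have hcomp : ((0 : FiniteAdeleRing (𝓞 F) F).1 v) = (0 : v.adicCompletion F) := rfl
    rw [hcomp, map_zero]
    exact zero_le
  neg_mem' := by
    intro a ha v
    have hcomp : ((-a).1 v) = -(a.1 v) := rfl
    rw [hcomp, Valuation.map_neg]
    exact ha v

/-- Twice the integral adeles. -/
def Nsub : AddSubgroup ↥(Osub F) := (zsmulAddGroupHom (2 : ℤ) : ↥(Osub F) →+ ↥(Osub F)).range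

/-- The canonical map from the ring of integers into the integral adeles. -/
def iota : 𝓞 F →+ ↥(Osub F) where
  toFun a := ⟨algebraMap (𝓞 F) (FiniteAdeleRing (𝓞 F) F) a, fun v =>
    le_of_eq_of_le (valued_algebraMapF F a v) (intValuation_le_one v a)⟩
  map_zero' := Subtype.ext (map_zero _)
  map_add' a b := Subtype.ext (map_add _ _ _)

def phi : 𝓞 F →+ (↥(Osub F) ⧸ Nsub F) := (QuotientAddGroup.mk' (Nsub F)).comp (iota F)

lemma two_ne_zero' : (2 : 𝓞 F) ≠ 0 := two_ne_zero

lemma intVal_two_ne_zero (v : HeightOneSpectrum (𝓞 F)) : v.intValuationDef (2 : 𝓞 F) ≠ 0 :=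
  intValuation_ne_zero v _ (two_ne_zero' F)

lemma twoF_eq : (2 : F) = algebraMap (𝓞 F) F (2 : 𝓞 F) := (map_ofNat _ 2).symm

lemma twoF_ne_zero : (2 : F) ≠ 0 := two_ne_zero

lemma valued_twoinv (v : HeightOneSpectrum (𝓞 F)) :
    Valued.v (((2 : F)⁻¹ : F) : v.adicCompletion F) = (v.intValuationDef (2 : 𝓞 F))⁻¹ := by
  rw [valuedAdicCompletion_eq_valuation', map_inv₀, twoF_eq, valuation_of_algebraMap,
    intValuation_apply]

lemma fa_algebraMapF_comp (k : F) (v : HeightOneSpectrum (𝓞 F)) :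
    (algebraMap F (FiniteAdeleRing (𝓞 F) F) k).1 v = (k : v.adicCompletion F) := rfl

lemma phi_surjective : Function.Surjective (phi F) := by
  intro q
  obtain ⟨x, rfl⟩ := QuotientAddGroup.mk'_surjective (Nsub F) q
  obtain ⟨a, ha⟩ := density x.1 x.2 (2 : 𝓞 F) (two_ne_zero' F)
  set y0 : FiniteAdeleRing (𝓞 F) F :=
    algebraMap F (FiniteAdeleRing (𝓞 F) F) ((2 : F)⁻¹) * (x.1 - (iota F a).1) with hy0def
  have hy0 : y0 ∈ Osub F := by
    intro v
    have hcomp : y0.1 v = (((2 : F)⁻¹ : F) : v.adicCompletion F)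
        * (x.1.1 v - algebraMap (𝓞 F) (v.adicCompletion F) a) := rfl
    rw [hcomp, Valuation.map_mul, valued_twoinv, ← div_eq_inv_mul,
      zm_div_le_one _ _ (intVal_two_ne_zero F v)]
    exact ha v
  set y : ↥(Osub F) := ⟨y0, hy0⟩ with hydef
  refine ⟨a, ?_⟩
  have key : (zsmulAddGroupHom (2 : ℤ)) y = x - iota F a := by
    apply Subtype.ext
    show (2 : ℤ) • y0 = x.1 - (iota F a).1
    rw [zsmul_eq_mul, hy0def]
    have h2A : ((2 : ℤ) : FiniteAdeleRing (𝓞 F) F)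
        = algebraMap F (FiniteAdeleRing (𝓞 F) F) (2 : F) := by
      rw [map_ofNat]
      norm_cast
    rw [h2A, ← mul_assoc, ← map_mul, mul_inv_cancel₀ (twoF_ne_zero F), map_one, one_mul]
  have hmem : x - iota F a ∈ Nsub F := ⟨y, key⟩
  exact (QuotientAddGroup.eq_iff_sub_mem.mpr hmem).symm

lemma phi_ker : (phi F).ker = (Ideal.span {(2 : 𝓞 F)}).toAddSubgroup := by
  ext a
  simp only [AddMonoidHom.mem_ker, phi, AddMonoidHom.coe_comp, Function.comp_apply,
    QuotientAddGroup.mk'_apply, QuotientAddGroup.eq_zero_iff, Submodule.mem_toAddSubgroup]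
  constructor
  · rintro ⟨y, hy⟩
    have hval : ∀ v : HeightOneSpectrum (𝓞 F),
        v.valuation F (algebraMap (𝓞 F) F a * (2 : F)⁻¹) ≤ 1 := by
      intro v
      have hyv : (2 : ℤ) • (y.1.1 v) = algebraMap (𝓞 F) (v.adicCompletion F) a := by
        have := congrArg (fun z : ↥(Osub F) => z.1.1 v) hy
        exact this
      have hv2 : ((2 : ℤ) : v.adicCompletion F)
          = algebraMap (𝓞 F) (v.adicCompletion F) (2 : 𝓞 F) := by
        rw [map_ofNat]
        norm_cast
      have hval2 : Valued.v (algebraMap (𝓞 F) (v.adicCompletion F) (2 : 𝓞 F))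
          = v.intValuationDef (2 : 𝓞 F) := valued_algebraMapF F 2 v
      have heq : v.intValuationDef a
          = v.intValuationDef (2 : 𝓞 F) * Valued.v (y.1.1 v) := by
        rw [← hval2, ← Valuation.map_mul, ← hv2, ← zsmul_eq_mul, hyv]
        exact (valued_algebraMapF F a v).symm
      rw [Valuation.map_mul, map_inv₀, twoF_eq, valuation_of_algebraMap,
        valuation_of_algebraMap, intValuation_apply, intValuation_apply, heq,
        mul_comm (v.intValuationDef (2 : 𝓞 F)), mul_assoc,
        mul_inv_cancel₀ (intVal_two_ne_zero F v), mul_one]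
      exact y.2 v
    obtain ⟨b, hb⟩ := exists_algebraMap_eq_of_valuation_le_one _ hval
    rw [Ideal.mem_span_singleton]
    refine ⟨b, ?_⟩
    apply IsFractionRing.injective (𝓞 F) F
    rw [map_mul, hb, ← twoF_eq, mul_comm ((2 : F)), mul_assoc,
      inv_mul_cancel₀ (twoF_ne_zero F), mul_one]
  · intro hmem
    obtain ⟨c, rfl⟩ := Ideal.mem_span_singleton.mp hmem
    refine ⟨iota F c, ?_⟩
    apply Subtype.ext
    show (2 : ℤ) • (iota F c).1 = (iota F (2 * c)).1
    show (2 : ℤ) • (algebraMap (𝓞 F) (FiniteAdeleRing (𝓞 F) F) c)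
      = algebraMap (𝓞 F) (FiniteAdeleRing (𝓞 F) F) (2 * c)
    rw [zsmul_eq_mul, map_mul]
    congr 1
    rw [map_ofNat]
    norm_cast

lemma card_quot : Nat.card (↥(Osub F) ⧸ Nsub F) = 2 ^ Module.finrank ℚ F := by
  have e1 := QuotientAddGroup.quotientKerEquivOfSurjective (phi F) (phi_surjective F)
  rw [← Nat.card_congr e1.toEquiv, phi_ker]
  have hq : Nat.card (𝓞 F ⧸ (Ideal.span {(2 : 𝓞 F)}).toAddSubgroup)
      = Nat.card (𝓞 F ⧸ (Ideal.span {(2 : 𝓞 F)})) := rfl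
  rw [hq, ← Submodule.cardQuot_apply, ← Ideal.absNorm_apply, Ideal.absNorm_span_singleton]
  have h2 : (2 : 𝓞 F) = algebraMap ℤ (𝓞 F) 2 := by
    rw [map_ofNat]
  rw [h2, Algebra.norm_algebraMap_of_basis (Module.Free.chooseBasis ℤ (𝓞 F)),
    ← Module.finrank_eq_card_chooseBasisIndex, NumberField.RingOfIntegers.rank]
  simp [Int.natAbs_pow]

end Assembly

section Transfer

variable (K L : Type*) [Field K] [NumberField K] [Field L] [NumberField L]
  (j : FiniteAdeleRing (𝓞 L) L ≃+* FiniteAdeleRing (𝓞 K) K)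
  (hj : Continuous j) (hj' : Continuous j.symm)

/-- The isomorphism restricted to integral adeles. -/
def jOsub : ↥(Osub L) ≃+ ↥(Osub K) where
  toFun x := ⟨j x.1, by
    have hpb : PBgen _ (x.1) := (pb_iff x.1).mpr x.2
    exact (pb_iff (j x.1)).mp (pb_map j hj hj' _ hpb)⟩
  invFun x := ⟨j.symm x.1, by
    have hpb : PBgen _ (x.1) := (pb_iff x.1).mpr x.2
    exact (pb_iff _).mp (pb_map j.symm hj' (by simpa using hj) _ hpb)⟩
  left_inv x := Subtype.ext (j.symm_apply_apply x.1)
  right_inv x := Subtype.ext (j.apply_symm_apply x.1)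
  map_add' x y := Subtype.ext (map_add j _ _)

lemma jOsub_map : AddSubgroup.map (↑(jOsub K L j hj hj')) (Nsub L) = Nsub K := by
  ext z
  simp only [AddSubgroup.mem_map, Nsub, AddMonoidHom.mem_range, zsmulAddGroupHom_apply]
  constructor
  · rintro ⟨y, ⟨w, rfl⟩, rfl⟩
    exact ⟨(jOsub K L j hj hj') w, (map_zsmul (jOsub K L j hj hj') 2 w).symm⟩
  · rintro ⟨w, rfl⟩
    refine ⟨(2 : ℤ) • (jOsub K L j hj hj').symm w, ⟨(jOsub K L j hj hj').symm w, rfl⟩, ?_⟩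
    rw [map_zsmul]
    congr 1
    exact (jOsub K L j hj hj').apply_symm_apply w

include j hj hj' in
lemma card_eq : Nat.card (↥(Osub K) ⧸ Nsub K) = Nat.card (↥(Osub L) ⧸ Nsub L) :=
  (Nat.card_congr (QuotientAddGroup.congr (Nsub L) (Nsub K) (jOsub K L j hj hj')
    (jOsub_map K L j hj hj')).toEquiv).symm

end Transfer

end AdeleDeg

end

open IsDedekindDomain NumberField

theorem stmt_14 (K L : Type*) [Field K] [NumberField K] [Field L] [NumberField L]
    (j : FiniteAdeleRing (𝓞 L) L ≃+* FiniteAdeleRing (𝓞 K) K)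
    (hj : Continuous j) (hj' : Continuous j.symm) :
    Module.finrank ℚ K = Module.finrank ℚ L := by
  have h := AdeleDeg.card_eq K L j hj hj'
  rw [AdeleDeg.card_quot, AdeleDeg.card_quot] at h
  exact Nat.pow_right_injective le_rfl h
end
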